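/- The minimum of a function f: Dⁿ → ℝ over Dⁿ equals the minimum of its Lovász extension f^L over [-α,1]ⁿ. -/
import Mathlib


open Finset

/-- The three-element domain `D = {-α, 0, 1}`, abstractly. -/
inductive D3 : Type
  | neg : D3
  | zero : D3
  | one : D3
deriving DecidableEq

instance : Fintype D3 :=
  ⟨{D3.neg, D3.zero, D3.one}, by rintro (_ | _ | _) <;> simp⟩

namespace D3

/-- The embedding of `D3` into `ℝ` sending `neg ↦ -α`, `zero ↦ 0`, `one ↦ 1`. -/
def emb (α : ℝ) : D3 → ℝ
  | neg => -α
  | zero => 0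
  | one => 1

/-- The partial order `0 ≺ 1`, `0 ≺ -α`, with `1` and `-α` incomparable. -/
instance : PartialOrder D3 where
  le x y := x = y ∨ x = zero
  le_refl x := Or.inl rfl
  le_trans x y z hxy hyz := by
    rcases hxy with rfl | rfl
    · exact hyz
    · exact Or.inr rfl
  le_antisymm x y hxy hyx := by
    rcases hxy with rfl | rfl
    · rfl
    · rcases hyx with rfl | rfl <;> rfl

/-- `∧₀` : `1 ∧₀ (-α) = (-α) ∧₀ 1 = 0`, and min w.r.t. `≺` otherwise. -/
def meet0 (x y : D3) : D3 := if x = y then x else zero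

/-- `∨₀` : `1 ∨₀ (-α) = (-α) ∨₀ 1 = 0`, and max w.r.t. `≺` otherwise. -/
def join0 (x y : D3) : D3 :=
  if x = y then x else if x = zero then y else if y = zero then x else zero

/-- `∨₁` : `1 ∨₁ (-α) = (-α) ∨₁ 1 = 1`, and max w.r.t. `≺` otherwise. -/
def join1 (x y : D3) : D3 :=
  if x = y then x else if x = zero then y else if y = zero then x else one

end D3

/-- Componentwise `∧₀` on `Dⁿ`. -/
def vmeet0 {n : ℕ} (a b : Fin n → D3) : Fin n → D3 := fun i => D3.meet0 (a i) (b i)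

/-- Componentwise `∨₀` on `Dⁿ`. -/
def vjoin0 {n : ℕ} (a b : Fin n → D3) : Fin n → D3 := fun i => D3.join0 (a i) (b i)

/-- Componentwise `∨₁` on `Dⁿ`. -/
def vjoin1 {n : ℕ} (a b : Fin n → D3) : Fin n → D3 := fun i => D3.join1 (a i) (b i)

/-- `lam` is a probability distribution on `Dⁿ`. -/
def IsDist (n : ℕ) (lam : (Fin n → D3) → ℝ) : Prop :=
  (∀ a, 0 ≤ lam a ∧ lam a ≤ 1) ∧ ∑ a : Fin n → D3, lam a = 1

/-- `lam` has marginal vector `x`, i.e. `Σ_a lam(a)·a = x` in `ℝⁿ`. -/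
def HasMarginal (α : ℝ) (n : ℕ) (lam : (Fin n → D3) → ℝ) (x : Fin n → ℝ) : Prop :=
  ∀ i, ∑ a : Fin n → D3, lam a * D3.emb α (a i) = x i

/-- The support of `lam` forms a chain w.r.t. the componentwise order on `Dⁿ`. -/
def ChainSupp (n : ℕ) (lam : (Fin n → D3) → ℝ) : Prop :=
  ∀ a b : Fin n → D3, lam a ≠ 0 → lam b ≠ 0 → a ≤ b ∨ b ≤ a

/-- The box `[-α,1]ⁿ`. -/
def Box (α : ℝ) (n : ℕ) : Set (Fin n → ℝ) := {x | ∀ i, x i ∈ Set.Icc (-α) 1}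

/-- `f : Dⁿ → ℝ` is α-bisubmodular. -/
def AlphaBisub (α : ℝ) (n : ℕ) (f : (Fin n → D3) → ℝ) : Prop :=
  ∀ a b : Fin n → D3,
    f (vmeet0 a b) + α * f (vjoin0 a b) + (1 - α) * f (vjoin1 a b) ≤ f a + f b

/-- Number of zero coordinates. -/
def zc {n : ℕ} (c : Fin n → D3) : ℕ := (Finset.univ.filter fun i => c i = D3.zero).card

/-- The convex closure `f⁻(x)`. -/
noncomputable def cClos (α : ℝ) (n : ℕ) (f : (Fin n → D3) → ℝ) (x : Fin n → ℝ) : ℝ :=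
  sInf {y | ∃ lam, IsDist n lam ∧ HasMarginal α n lam x ∧ y = ∑ a : Fin n → D3, lam a * f a}
/-- the minimum of `f` over `Dⁿ` equals the minimum of `f^L` over `[-α,1]ⁿ`. -/
theorem stmt4 (α : ℝ) (hα : α ∈ Set.Ioc (0 : ℝ) 1) (n : ℕ) (f : (Fin n → D3) → ℝ)
    (Λ : (Fin n → ℝ) → (Fin n → D3) → ℝ)
    (hΛ : ∀ x ∈ Box α n, IsDist n (Λ x) ∧ HasMarginal α n (Λ x) x ∧ ChainSupp n (Λ x)) :
    sInf {y | ∃ a : Fin n → D3, y = f a}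
      = sInf {y | ∃ x ∈ Box α n, y = ∑ a : Fin n → D3, Λ x a * f a} := by

  obtain ⟨hα0, hα1⟩ := hα
  obtain ⟨a0, -, ha0⟩ := Finset.exists_min_image (Finset.univ : Finset (Fin n → D3)) f
    ⟨fun _ => D3.zero, Finset.mem_univ _⟩
  set x : Fin n → ℝ := fun i => D3.emb α (a0 i) with hxdef
  have hxbox : x ∈ Box α n := by
    intro i
    cases h : a0 i <;> simp [x, h, D3.emb, Set.mem_Icc] <;> linarith
  obtain ⟨⟨hnn, hsum⟩, hmarg, hchain⟩ := hΛ x hxbox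
  have hemble : ∀ c : D3, D3.emb α c ≤ 1 := by rintro (_|_|_) <;> simp [D3.emb] <;> linarith
  have hembge : ∀ c : D3, -α ≤ D3.emb α c := by rintro (_|_|_) <;> simp [D3.emb] <;> linarith
  have hkey : ∀ b, Λ x b ≠ 0 → b = a0 := by
    intro b hb
    funext i
    have hΛb : 0 < Λ x b := lt_of_le_of_ne (hnn b).1 (Ne.symm hb)
    have hm := hmarg i
    cases h : a0 i with
    | one =>
      have hx1 : x i = 1 := by simp [x, h, D3.emb]
      have hz : ∑ c : Fin n → D3, Λ x c * (1 - D3.emb α (c i)) = 0 := by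
        rw [Finset.sum_congr rfl (fun c _ => by ring_nf :
          ∀ c ∈ Finset.univ, Λ x c * (1 - D3.emb α (c i))
            = Λ x c - Λ x c * D3.emb α (c i))]
        rw [Finset.sum_sub_distrib, hsum, hm, hx1]
        ring
      have hterm := (Finset.sum_eq_zero_iff_of_nonneg (fun c _ =>
        mul_nonneg (hnn c).1 (by linarith [hemble (c i)]))).mp hz b (Finset.mem_univ b)
      have : D3.emb α (b i) = 1 := by
        have h1 : (1 : ℝ) - D3.emb α (b i) = 0 := by
          rcases mul_eq_zero.mp hterm with h' | h'
          · exact absurd h' hb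
          · exact h'
        linarith
      cases hbi : b i <;> rw [hbi] at this <;> simp [D3.emb] at this <;> linarith
    | neg =>
      have hx1 : x i = -α := by simp [x, h, D3.emb]
      have hz : ∑ c : Fin n → D3, Λ x c * (D3.emb α (c i) + α) = 0 := by
        rw [Finset.sum_congr rfl (fun c _ => by ring_nf :
          ∀ c ∈ Finset.univ, Λ x c * (D3.emb α (c i) + α)
            = Λ x c * D3.emb α (c i) + α * Λ x c)]
        rw [Finset.sum_add_distrib, ← Finset.mul_sum, hsum, hm, hx1]
        ring
      have hterm := (Finset.sum_eq_zero_iff_of_nonneg (fun c _ =>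
        mul_nonneg (hnn c).1 (by linarith [hembge (c i)]))).mp hz b (Finset.mem_univ b)
      have : D3.emb α (b i) = -α := by
        have h1 : D3.emb α (b i) + α = 0 := by
          rcases mul_eq_zero.mp hterm with h' | h'
          · exact absurd h' hb
          · exact h'
        linarith
      cases hbi : b i <;> rw [hbi] at this <;> simp [D3.emb] at this <;> linarith
    | zero =>
      have hx1 : x i = 0 := by simp [x, h, D3.emb]
      rw [hx1] at hm
      by_contra hne
      cases hbi : b i with
      | zero => exact hne hbi
      | one =>
        have hpos : ∀ c : Fin n → D3, 0 ≤ Λ x c * D3.emb α (c i) := by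
          intro c
          rcases eq_or_ne (Λ x c) 0 with h0 | h0
          · simp [h0]
          · rcases hchain b c hb h0 with hle | hle
            · have := hle i
              rcases this with heq | heq
              · rw [← heq, hbi]
                exact mul_nonneg (hnn c).1 (by simp [D3.emb])
              · rw [hbi] at heq; exact absurd heq (by simp)
            · have := hle i
              rcases this with heq | heq
              · rw [heq, hbi]
                exact mul_nonneg (hnn c).1 (by simp [D3.emb])
              · rw [heq]
                exact mul_nonneg (hnn c).1 (by simp [D3.emb])
        have hterm := (Finset.sum_eq_zero_iff_of_nonneg (fun c _ => hpos c)).mp hm b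
          (Finset.mem_univ b)
        rw [hbi] at hterm
        simp [D3.emb] at hterm
        exact hb hterm
      | neg =>
        have hneg : ∀ c : Fin n → D3, Λ x c * D3.emb α (c i) ≤ 0 := by
          intro c
          rcases eq_or_ne (Λ x c) 0 with h0 | h0
          · simp [h0]
          · rcases hchain b c hb h0 with hle | hle
            · have := hle i
              rcases this with heq | heq
              · rw [← heq, hbi]
                exact mul_nonpos_of_nonneg_of_nonpos (hnn c).1 (by simp [D3.emb]; linarith)
              · rw [hbi] at heq; exact absurd heq (by simp)
            · have := hle i
              rcases this with heq | heq
              · rw [heq, hbi]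
                exact mul_nonpos_of_nonneg_of_nonpos (hnn c).1 (by simp [D3.emb]; linarith)
              · rw [heq]
                exact mul_nonpos_of_nonneg_of_nonpos (hnn c).1 (by simp [D3.emb])
        have hz : ∑ c : Fin n → D3, -(Λ x c * D3.emb α (c i)) = 0 := by
          rw [Finset.sum_neg_distrib, hm, neg_zero]
        have hterm := (Finset.sum_eq_zero_iff_of_nonneg (fun c _ => by
          linarith [hneg c])).mp hz b (Finset.mem_univ b)
        rw [hbi] at hterm
        simp [D3.emb] at hterm
        rcases hterm with h' | h'
        · exact hb h'
        · linarith
  have hΛa0 : Λ x a0 = 1 := by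
    rw [← hsum]
    symm
    apply Finset.sum_eq_single
    · intro c _ hne
      by_contra h0
      exact hne (hkey c h0)
    · intro h; exact absurd (Finset.mem_univ a0) h
  have hval : ∑ b : Fin n → D3, Λ x b * f b = f a0 := by
    rw [Finset.sum_eq_single a0]
    · rw [hΛa0, one_mul]
    · intro c _ hne
      have h0 : Λ x c = 0 := by
        by_contra h0
        exact hne (hkey c h0)
      rw [h0, zero_mul]
    · intro h; exact absurd (Finset.mem_univ a0) h
  have hlb2 : ∀ y ∈ {y | ∃ x' ∈ Box α n, y = ∑ a : Fin n → D3, Λ x' a * f a}, f a0 ≤ y := by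
    rintro y ⟨x', hx', rfl⟩
    obtain ⟨⟨hnn', hsum'⟩, -, -⟩ := hΛ x' hx'
    calc f a0 = ∑ a : Fin n → D3, Λ x' a * f a0 := by rw [← Finset.sum_mul, hsum', one_mul]
    _ ≤ ∑ a : Fin n → D3, Λ x' a * f a :=
        Finset.sum_le_sum fun a _ => mul_le_mul_of_nonneg_left (ha0 a (Finset.mem_univ a))
          (hnn' a).1
  have hlb1 : ∀ y ∈ {y | ∃ a : Fin n → D3, y = f a}, f a0 ≤ y := by
    rintro y ⟨a, rfl⟩
    exact ha0 a (Finset.mem_univ a)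
  have h1 : sInf {y | ∃ a : Fin n → D3, y = f a} = f a0 :=
    le_antisymm (csInf_le ⟨f a0, hlb1⟩ ⟨a0, rfl⟩) (le_csInf ⟨f a0, a0, rfl⟩ hlb1)
  have h2 : sInf {y | ∃ x' ∈ Box α n, y = ∑ a : Fin n → D3, Λ x' a * f a} = f a0 :=
    le_antisymm (csInf_le ⟨f a0, hlb2⟩ ⟨x, hxbox, hval.symm⟩)
      (le_csInf ⟨f a0, x, hxbox, hval.symm⟩ hlb2)
  rw [h1, h2]
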